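/- Let f : {-1,1}^n → ℝ be a pseudo-Boolean function with Fourier expansion f(x) = Σ_{I ∈ 𝓕} ŵ(I) χ_I(x) and Fourier width ρ. Then E[f(x)^4] ≤ (2ρ + 1) · (Σ_{I ∈ 𝓕} ŵ(I)^2)^2 - 2ρ · Σ_{I ∈ 𝓕} ŵ(I)^4. -/

import Mathlib

open scoped symmDiff

/-- The ±1 value of a Boolean coordinate. -/
noncomputable def sgn (b : Bool) : ℝ := if b then 1 else -1

/-- Expectation of `g` over the uniform distribution on `{-1,1}^n`
(coordinates encoded as `Bool`). -/
noncomputable def pbExp (n : ℕ) (g : (Fin n → Bool) → ℝ) : ℝ :=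
  (∑ x : Fin n → Bool, g x) / 2 ^ n

/-- The character `χ_I(x) = ∏_{i ∈ I} x_i`. -/
noncomputable def chi {n : ℕ} (I : Finset (Fin n)) (x : Fin n → Bool) : ℝ :=
  ∏ i ∈ I, sgn (x i)

lemma sgn_mul_self (b : Bool) : sgn b * sgn b = 1 := by
  cases b <;> simp [sgn]

lemma chi_mul_chi {n : ℕ} (I J : Finset (Fin n)) (x : Fin n → Bool) :
    chi I x * chi J x = chi (I ∆ J) x := by
  classical
  have hI : chi I x = (∏ i ∈ I \ J, sgn (x i)) * ∏ i ∈ I ∩ J, sgn (x i) := by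
    rw [chi, ← Finset.prod_union (Finset.disjoint_sdiff_inter I J),
      Finset.sdiff_union_inter]
  have hJ : chi J x = (∏ i ∈ J \ I, sgn (x i)) * ∏ i ∈ I ∩ J, sgn (x i) := by
    rw [chi, Finset.inter_comm I J, ← Finset.prod_union (Finset.disjoint_sdiff_inter J I),
      Finset.sdiff_union_inter]
  have hS : chi (I ∆ J) x = (∏ i ∈ I \ J, sgn (x i)) * ∏ i ∈ J \ I, sgn (x i) := by
    rw [chi, symmDiff_def, Finset.sup_eq_union, Finset.prod_union disjoint_sdiff_sdiff]
  have hone : (∏ i ∈ I ∩ J, sgn (x i)) * ∏ i ∈ I ∩ J, sgn (x i) = 1 := by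
    rw [← Finset.prod_mul_distrib]
    exact Finset.prod_eq_one fun i _ => sgn_mul_self (x i)
  rw [hI, hJ, hS]
  calc (∏ i ∈ I \ J, sgn (x i)) * (∏ i ∈ I ∩ J, sgn (x i)) *
        ((∏ i ∈ J \ I, sgn (x i)) * ∏ i ∈ I ∩ J, sgn (x i))
      = (∏ i ∈ I \ J, sgn (x i)) * (∏ i ∈ J \ I, sgn (x i)) *
        ((∏ i ∈ I ∩ J, sgn (x i)) * ∏ i ∈ I ∩ J, sgn (x i)) := by ring
    _ = _ := by rw [hone, mul_one]

lemma pbExp_chi {n : ℕ} (S : Finset (Fin n)) :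
    pbExp n (chi S) = if S = ∅ then 1 else 0 := by
  classical
  rcases eq_or_ne S ∅ with h | h
  · subst h
    simp [pbExp, chi]
  · simp only [h, if_false, pbExp, div_eq_zero_iff]
    left
    have key : ∑ x : Fin n → Bool, chi S x
        = ∏ i : Fin n, ∑ b : Bool, (if i ∈ S then sgn b else 1) := by
      rw [Finset.prod_univ_sum]
      rw [← Fintype.piFinset_univ]
      apply Finset.sum_congr rfl
      intro x _
      rw [chi, Finset.prod_ite_mem, Finset.univ_inter]
    rw [key]
    obtain ⟨i, hi⟩ := Finset.nonempty_iff_ne_empty.2 h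
    apply Finset.prod_eq_zero (Finset.mem_univ i)
    simp [hi, sgn]

lemma pbExp_sum {n : ℕ} {α : Type*} (s : Finset α) (g : α → (Fin n → Bool) → ℝ) :
    pbExp n (fun x => ∑ a ∈ s, g a x) = ∑ a ∈ s, pbExp n (g a) := by
  simp only [pbExp, ← Finset.sum_div]
  rw [Finset.sum_comm]

lemma pbExp_const_mul {n : ℕ} (c : ℝ) (g : (Fin n → Bool) → ℝ) :
    pbExp n (fun x => c * g x) = c * pbExp n g := by
  simp [pbExp, ← Finset.mul_sum, mul_div_assoc]

/-- If `f : {-1,1}^n → ℝ` has Fourier expansion `f = ∑_{I ∈ 𝓕} ŵ(I) χ_I` and Fourier width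
`ρ`, then `E[f(x)^4] ≤ (2ρ + 1) (∑_{I ∈ 𝓕} ŵ(I)^2)^2 - 2ρ ∑_{I ∈ 𝓕} ŵ(I)^4`. -/
theorem fourth_moment_width_bound (n ρ : ℕ)
    (𝓕 : Finset (Finset (Fin n)))
    (w : Finset (Fin n) → ℝ) (hw : ∀ I ∈ 𝓕, w I ≠ 0)
    (f : (Fin n → Bool) → ℝ) (hf : ∀ x, f x = ∑ I ∈ 𝓕, w I * chi I x)
    (hρ : ∀ i : Fin n, (𝓕.filter (fun I => i ∈ I)).card ≤ ρ) :
    pbExp n (fun x => f x ^ 4) ≤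
      (2 * ρ + 1 : ℝ) * (∑ I ∈ 𝓕, w I ^ 2) ^ 2 - (2 * ρ : ℝ) * ∑ I ∈ 𝓕, w I ^ 4 := by
  classical
  set P : Finset (Finset (Fin n) × Finset (Fin n)) := 𝓕 ×ˢ 𝓕 with hP
  set a : Finset (Fin n) × Finset (Fin n) → ℝ := fun p => w p.1 * w p.2 with ha
  set d : Finset (Fin n) × Finset (Fin n) → Finset (Fin n) := fun p => p.1 ∆ p.2 with hd
  set T : Finset (Finset (Fin n)) := P.image d with hT
  set c : Finset (Fin n) → ℝ := fun S => ∑ p ∈ P.filter (fun p => d p = S), a p with hc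
  have hmemT : ∀ p ∈ P, d p ∈ T := fun p hp => Finset.mem_image_of_mem d hp
  -- d p = S forces the second coordinate
  have hsnd : ∀ p : Finset (Fin n) × Finset (Fin n), ∀ S, d p = S → p.2 = p.1 ∆ S := by
    intro p S h
    rw [← h]
    show p.2 = p.1 ∆ (p.1 ∆ p.2)
    rw [symmDiff_symmDiff_cancel_left]
  have hfst : ∀ p : Finset (Fin n) × Finset (Fin n), ∀ S, d p = S → p.1 = p.2 ∆ S := by
    intro p S h
    rw [← h]
    show p.1 = p.2 ∆ (p.1 ∆ p.2)
    rw [symmDiff_comm p.1 p.2, symmDiff_symmDiff_cancel_left]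
  -- Step 1: expansion of f^2
  have hf2 : ∀ x, f x ^ 2 = ∑ p ∈ P, a p * (chi p.1 x * chi p.2 x) := by
    intro x
    rw [sq, hf, Finset.sum_mul_sum, hP, Finset.sum_product]
    apply Finset.sum_congr rfl; intro I _
    apply Finset.sum_congr rfl; intro J _
    ring
  have hf4 : ∀ x, f x ^ 4 = ∑ p ∈ P, ∑ q ∈ P,
      a p * a q * (chi p.1 x * chi p.2 x * (chi q.1 x * chi q.2 x)) := by
    intro x
    have : f x ^ 4 = f x ^ 2 * f x ^ 2 := by ring
    rw [this, hf2, Finset.sum_mul_sum]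
    apply Finset.sum_congr rfl; intro p _
    apply Finset.sum_congr rfl; intro q _
    ring
  -- Step 2: E[f^4] as a double sum
  have step2 : pbExp n (fun x => f x ^ 4)
      = ∑ p ∈ P, ∑ q ∈ P, a p * a q * (if d p = d q then 1 else 0) := by
    have : pbExp n (fun x => f x ^ 4)
        = ∑ p ∈ P, ∑ q ∈ P, a p * a q *
            pbExp n (fun x => chi p.1 x * chi p.2 x * (chi q.1 x * chi q.2 x)) := by
      calc pbExp n (fun x => f x ^ 4)
          = pbExp n (fun x => ∑ p ∈ P, ∑ q ∈ P,
              a p * a q * (chi p.1 x * chi p.2 x * (chi q.1 x * chi q.2 x))) := by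
            congr 1; funext x; exact hf4 x
        _ = ∑ p ∈ P, pbExp n (fun x => ∑ q ∈ P,
              a p * a q * (chi p.1 x * chi p.2 x * (chi q.1 x * chi q.2 x))) :=
            pbExp_sum _ _
        _ = _ := by
            apply Finset.sum_congr rfl; intro p _
            rw [pbExp_sum]
            apply Finset.sum_congr rfl; intro q _
            exact pbExp_const_mul _ _
    rw [this]
    apply Finset.sum_congr rfl; intro p _
    apply Finset.sum_congr rfl; intro q _
    congr 1
    have hchi : (fun x => chi p.1 x * chi p.2 x * (chi q.1 x * chi q.2 x))
        = chi ((p.1 ∆ p.2) ∆ (q.1 ∆ q.2)) := by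
      funext x
      rw [chi_mul_chi, chi_mul_chi, chi_mul_chi]
    rw [hchi, pbExp_chi]
    by_cases h : d p = d q
    · simp only [h, if_true]
      rw [if_pos]
      have : p.1 ∆ p.2 = q.1 ∆ q.2 := h
      rw [this, ← Finset.bot_eq_empty, symmDiff_self]
    · simp only [h, if_false]
      rw [if_neg]
      intro hcon
      apply h
      have : (p.1 ∆ p.2) ∆ (q.1 ∆ q.2) = ⊥ := hcon
      exact symmDiff_eq_bot.mp this
  -- Step 3: group into fibers
  have step3 : pbExp n (fun x => f x ^ 4) = ∑ S ∈ T, c S ^ 2 := by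
    rw [step2]
    have inner : ∀ p ∈ P, ∑ q ∈ P, a p * a q * (if d p = d q then 1 else 0)
        = a p * c (d p) := by
      intro p _
      rw [hc, Finset.mul_sum, Finset.sum_filter]
      apply Finset.sum_congr rfl; intro q _
      by_cases h : d q = d p
      · simp [h]
      · rw [if_neg (fun h' => h h'.symm), if_neg h, mul_zero]
    rw [Finset.sum_congr rfl inner]
    have := Finset.sum_fiberwise_eq_sum_filter P T d (fun p => a p * c (d p))
    have hfil : P.filter (fun p => d p ∈ T) = P := by
      apply Finset.filter_true_of_mem
      exact hmemT
    rw [hfil] at this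
    rw [← this]
    apply Finset.sum_congr rfl; intro S _
    rw [sq, hc, Finset.sum_mul]
    apply Finset.sum_congr rfl; intro p hp
    rw [Finset.mem_filter] at hp
    rw [hp.2]
  -- Step 4: the empty fiber
  have hc_empty : c ∅ = ∑ I ∈ 𝓕, w I ^ 2 := by
    show (∑ p ∈ P.filter (fun p => d p = ∅), a p) = _
    rw [Finset.sum_filter, hP, Finset.sum_product]
    have : ∀ I ∈ 𝓕, (∑ J ∈ 𝓕, if d (I, J) = ∅ then a (I, J) else 0) = w I ^ 2 := by
      intro I hI
      have : ∀ J ∈ 𝓕, (if d (I, J) = ∅ then a (I, J) else 0)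
          = if J = I then w I * w J else 0 := by
        intro J _
        have hd' : d (I, J) = ∅ ↔ J = I := by
          show I ∆ J = ∅ ↔ J = I
          simp only [← Finset.bot_eq_empty]
          rw [symmDiff_eq_bot]
          constructor <;> intro h <;> exact h.symm
        by_cases h : J = I
        · rw [if_pos (hd'.mpr h), if_pos h]
        · rw [if_neg (fun hh => h (hd'.mp hh)), if_neg h]
      rw [Finset.sum_congr rfl this, Finset.sum_ite_eq' 𝓕 I (fun J => w I * w J),
        if_pos hI, sq]
    rw [Finset.sum_congr rfl this]
  -- Step 5: fiber cardinality bound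
  have card_fiber : ∀ S : Finset (Fin n), S ≠ ∅ →
      ((P.filter (fun p => d p = S)).card : ℝ) ≤ 2 * ρ := by
    intro S hS
    obtain ⟨i, hi⟩ := Finset.nonempty_iff_ne_empty.2 hS
    set F := P.filter (fun p => d p = S) with hF
    have hsplit : F = F.filter (fun p => i ∈ p.1) ∪ F.filter (fun p => ¬ i ∈ p.1) :=
      (Finset.filter_union_filter_not_eq _ F).symm
    have h1 : (F.filter (fun p => i ∈ p.1)).card ≤ ρ := by
      refine le_trans (Finset.card_le_card_of_injOn Prod.fst ?_ ?_) (hρ i)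
      · intro p hp
        rw [Finset.mem_coe, Finset.mem_filter] at hp ⊢
        obtain ⟨hpF, hip⟩ := hp
        rw [hF, Finset.mem_filter, hP, Finset.mem_product] at hpF
        exact ⟨hpF.1.1, hip⟩
      · intro p hp q hq hpq
        rw [Finset.mem_coe, Finset.mem_filter, hF, Finset.mem_filter] at hp hq
        have h2p := hsnd p S hp.1.2
        have h2q := hsnd q S hq.1.2
        exact Prod.ext hpq (by rw [h2p, h2q, hpq])
    have h2 : (F.filter (fun p => ¬ i ∈ p.1)).card ≤ ρ := by
      refine le_trans (Finset.card_le_card_of_injOn Prod.snd ?_ ?_) (hρ i)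
      · intro p hp
        rw [Finset.mem_coe, Finset.mem_filter] at hp ⊢
        obtain ⟨hpF, hip⟩ := hp
        rw [hF, Finset.mem_filter, hP, Finset.mem_product] at hpF
        refine ⟨hpF.1.2, ?_⟩
        have : i ∈ p.1 ∆ p.2 := by rw [show p.1 ∆ p.2 = S from hpF.2]; exact hi
        rw [Finset.mem_symmDiff] at this
        rcases this with ⟨h', _⟩ | ⟨h', _⟩
        · exact absurd h' hip
        · exact h'
      · intro p hp q hq hpq
        rw [Finset.mem_coe, Finset.mem_filter, hF, Finset.mem_filter] at hp hq
        have h2p := hfst p S hp.1.2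
        have h2q := hfst q S hq.1.2
        exact Prod.ext (by rw [h2p, h2q, hpq]) hpq
    have : F.card ≤ 2 * ρ := by
      calc F.card ≤ (F.filter (fun p => i ∈ p.1)).card
            + (F.filter (fun p => ¬ i ∈ p.1)).card := by
            have hcu := Finset.card_union_le (F.filter (fun p => i ∈ p.1))
              (F.filter (fun p => ¬ i ∈ p.1))
            rw [← hsplit] at hcu
            exact hcu
        _ ≤ ρ + ρ := Nat.add_le_add h1 h2
        _ = 2 * ρ := (two_mul ρ).symm
    calc (F.card : ℝ) ≤ ((2 * ρ : ℕ) : ℝ) := Nat.cast_le.mpr this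
      _ = 2 * ρ := by push_cast; ring
  -- Step 6: sum of a p ^2 over off-diagonal
  have hsq_total : ∑ p ∈ P, a p ^ 2 = (∑ I ∈ 𝓕, w I ^ 2) ^ 2 := by
    rw [hP, Finset.sum_product, sq, Finset.sum_mul_sum]
    apply Finset.sum_congr rfl; intro I _
    apply Finset.sum_congr rfl; intro J _
    rw [ha]; ring
  have hsq_diag : ∑ p ∈ P.filter (fun p => d p = ∅), a p ^ 2 = ∑ I ∈ 𝓕, w I ^ 4 := by
    rw [Finset.sum_filter, hP, Finset.sum_product]
    have : ∀ I ∈ 𝓕, (∑ J ∈ 𝓕, if d (I, J) = ∅ then a (I, J) ^ 2 else 0) = w I ^ 4 := by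
      intro I hI
      have : ∀ J ∈ 𝓕, (if d (I, J) = ∅ then a (I, J) ^ 2 else 0)
          = if J = I then (w I * w J) ^ 2 else 0 := by
        intro J _
        have hd' : d (I, J) = ∅ ↔ J = I := by
          show I ∆ J = ∅ ↔ J = I
          simp only [← Finset.bot_eq_empty]
          rw [symmDiff_eq_bot]
          constructor <;> intro h <;> exact h.symm
        by_cases h : J = I
        · rw [if_pos (hd'.mpr h), if_pos h]
        · rw [if_neg (fun hh => h (hd'.mp hh)), if_neg h]
      rw [Finset.sum_congr rfl this,
        Finset.sum_ite_eq' 𝓕 I (fun J => (w I * w J) ^ 2), if_pos hI]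
      ring
    rw [Finset.sum_congr rfl this]
  have hoffdiag : ∑ S ∈ T.erase ∅, ∑ p ∈ P.filter (fun p => d p = S), a p ^ 2
      = (∑ I ∈ 𝓕, w I ^ 2) ^ 2 - ∑ I ∈ 𝓕, w I ^ 4 := by
    rw [Finset.sum_fiberwise_eq_sum_filter P (T.erase ∅) d (fun p => a p ^ 2)]
    have hfil : P.filter (fun p => d p ∈ T.erase ∅) = P.filter (fun p => ¬ d p = ∅) := by
      apply Finset.filter_congr
      intro p hp
      simp only [Finset.mem_erase, hmemT p hp, and_true, eq_iff_iff]
    rw [hfil, ← hsq_total, ← hsq_diag,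
      ← Finset.sum_filter_add_sum_filter_not P (fun p => d p = ∅) (fun p => a p ^ 2)]
    ring
  -- Step 7: Cauchy–Schwarz on each fiber
  have cs : ∀ S ∈ T.erase ∅, c S ^ 2
      ≤ (2 * ρ : ℝ) * ∑ p ∈ P.filter (fun p => d p = S), a p ^ 2 := by
    intro S hS
    rw [Finset.mem_erase] at hS
    have h1 : c S ^ 2 ≤ ((P.filter (fun p => d p = S)).card : ℝ)
        * ∑ p ∈ P.filter (fun p => d p = S), a p ^ 2 := by
      have := Finset.sum_mul_sq_le_sq_mul_sq (P.filter (fun p => d p = S))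
        (fun _ => (1 : ℝ)) a
      simpa [hc] using this
    refine le_trans h1 ?_
    apply mul_le_mul_of_nonneg_right (card_fiber S hS.1)
    exact Finset.sum_nonneg fun p _ => sq_nonneg _
  -- Step 8: assemble
  have hsum_split : ∑ S ∈ T, c S ^ 2 ≤ c ∅ ^ 2 + ∑ S ∈ T.erase ∅, c S ^ 2 := by
    by_cases h : ∅ ∈ T
    · rw [← Finset.add_sum_erase T (fun S => c S ^ 2) h]
    · rw [Finset.erase_eq_of_notMem h]
      nlinarith [sq_nonneg (c ∅)]
  have hbound : ∑ S ∈ T.erase ∅, c S ^ 2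
      ≤ (2 * ρ : ℝ) * ((∑ I ∈ 𝓕, w I ^ 2) ^ 2 - ∑ I ∈ 𝓕, w I ^ 4) := by
    calc ∑ S ∈ T.erase ∅, c S ^ 2
        ≤ ∑ S ∈ T.erase ∅, (2 * ρ : ℝ) * ∑ p ∈ P.filter (fun p => d p = S), a p ^ 2 :=
          Finset.sum_le_sum cs
      _ = (2 * ρ : ℝ) * ∑ S ∈ T.erase ∅, ∑ p ∈ P.filter (fun p => d p = S), a p ^ 2 := by
          rw [Finset.mul_sum]
      _ = _ := by rw [hoffdiag]
  rw [step3]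
  calc ∑ S ∈ T, c S ^ 2 ≤ c ∅ ^ 2 + ∑ S ∈ T.erase ∅, c S ^ 2 := hsum_split
    _ ≤ (∑ I ∈ 𝓕, w I ^ 2) ^ 2
        + (2 * ρ : ℝ) * ((∑ I ∈ 𝓕, w I ^ 2) ^ 2 - ∑ I ∈ 𝓕, w I ^ 4) := by
        rw [hc_empty]
        linarith [hbound]
    _ = (2 * ρ + 1 : ℝ) * (∑ I ∈ 𝓕, w I ^ 2) ^ 2 - (2 * ρ : ℝ) * ∑ I ∈ 𝓕, w I ^ 4 := by
        ring
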